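/- Let A₁, A₂ be quantum channels such that A_i is (ε_i, δ_i)-QDP: for all neighboring ρ_i ∼ σ_i and all 0 ⪯ M_i ⪯ I, Tr(M_i A_i(ρ_i)) ≤ e^{ε_i} Tr(M_i A_i(σ_i)) + δ_i. Let ρ = ρ₁⊗ρ₂ and σ = σ₁⊗σ₂ with ρ_i ∼ σ_i. Let M be a two-outcome test on K₁⊗K₂ whose acceptance probability on product states factorizes as Tr(M(ξ₁⊗ξ₂)) = Σ_t Tr(E_t ξ₁) Tr(M_{2,t} ξ₂), where {E_t} is a POVM on K₁ and 0 ⪯ M_{2,t} ⪯ I on K₂. Then Tr(M (A₁⊗A₂)(ρ)) ≤ e^{ε₁+ε₂} Tr(M (A₁⊗A₂)(σ)) + e^{ε₂} δ₁ + δ₂. -/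

import Mathlib

open Matrix BigOperators Kronecker
open scoped ComplexOrder

lemma trace_re_nonneg_of_psd {n : Type*} [Fintype n] {A : Matrix n n ℂ}
    (hA : A.PosSemidef) : 0 ≤ A.trace.re := by
  obtain ⟨B, rfl⟩ : ∃ B : Matrix n n ℂ, A = Bᴴ * B := by
    classical
    open scoped MatrixOrder in
    exact CStarAlgebra.nonneg_iff_eq_star_mul_self.mp hA.nonneg
  rw [Matrix.trace]
  simp only [Matrix.diag, Matrix.mul_apply, Matrix.conjTranspose_apply]
  rw [Complex.re_sum]
  refine Finset.sum_nonneg fun i _ => ?_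
  rw [Complex.re_sum]
  refine Finset.sum_nonneg fun j _ => ?_
  rw [Complex.star_def, Complex.conj_mul', ← Complex.ofReal_pow, Complex.ofReal_re]
  positivity

lemma trace_mul_re_nonneg {n : Type*} [Fintype n] {A B : Matrix n n ℂ}
    (hA : A.PosSemidef) (hB : B.PosSemidef) : 0 ≤ (A * B).trace.re := by
  obtain ⟨C, rfl⟩ : ∃ C : Matrix n n ℂ, A = Cᴴ * C := by
    classical
    open scoped MatrixOrder in
    exact CStarAlgebra.nonneg_iff_eq_star_mul_self.mp hA.nonneg
  have : (Cᴴ * C * B).trace = (C * B * Cᴴ).trace := by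
    rw [Matrix.trace_mul_cycle, Matrix.trace_mul_cycle]
  rw [this]
  exact trace_re_nonneg_of_psd (hB.mul_mul_conjTranspose_same C)

lemma trace_mul_re_le_one {n : Type*} [Fintype n] [DecidableEq n] {M ξ : Matrix n n ℂ}
    (hM : (1 - M).PosSemidef) (hξ : ξ.PosSemidef) (hξt : ξ.trace = 1) :
    (M * ξ).trace.re ≤ 1 := by
  have h := trace_mul_re_nonneg hM hξ
  rw [Matrix.sub_mul, Matrix.one_mul, Matrix.trace_sub, Complex.sub_re, hξt] at h
  simpa using h

lemma psd_real_smul {n : Type*} [Fintype n] {A : Matrix n n ℂ}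
    (hA : A.PosSemidef) {c : ℝ} (hc : 0 ≤ c) : ((c : ℂ) • A).PosSemidef := by
  constructor
  · rw [Matrix.IsHermitian, Matrix.conjTranspose_smul, hA.1]
    simp [Complex.star_def]
  · intro x
    exact (hA.smul (a := (c : ℂ)) (by exact_mod_cast hc)).2 x

lemma psd_sum {n T : Type*} [Fintype n] [Fintype T] {f : T → Matrix n n ℂ}
    (hf : ∀ t, (f t).PosSemidef) : (∑ t, f t).PosSemidef :=
  Finset.sum_induction f Matrix.PosSemidef (fun _ _ ha hb => ha.add hb)
    Matrix.PosSemidef.zero (fun t _ => hf t)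

/-- **Tensor-product composition on product neighbors against one-way LOCC
tests.** If `A₁` is `(ε₁,δ₁)`-QDP and `A₂` is `(ε₂,δ₂)`-QDP (with respect to
neighbor relations `N₁, N₂`), both map density operators to density operators,
`ρ = ρ₁⊗ρ₂` and `σ = σ₁⊗σ₂` are product neighbors, and `M` is a two-outcome
test on `K₁⊗K₂` whose acceptance probability on product states factorizes as
`Tr(M(ξ₁⊗ξ₂)) = Σ_t Tr(E_t ξ₁) Tr(M_{2,t} ξ₂)` for a POVM `{E_t}` on `K₁` and
operators `0 ⪯ M_{2,t} ⪯ I` on `K₂`, then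
`Tr(M (A₁⊗A₂)(ρ)) ≤ e^{ε₁+ε₂} Tr(M (A₁⊗A₂)(σ)) + e^{ε₂} δ₁ + δ₂`. -/
theorem oneWayLOCC_basic_composition
    {H₁ H₂ K₁ K₂ : Type*}
    [Fintype H₁] [DecidableEq H₁] [Fintype H₂] [DecidableEq H₂]
    [Fintype K₁] [DecidableEq K₁] [Fintype K₂] [DecidableEq K₂]
    (A₁ : Matrix H₁ H₁ ℂ → Matrix K₁ K₁ ℂ)
    (A₂ : Matrix H₂ H₂ ℂ → Matrix K₂ K₂ ℂ)
    (N₁ : Matrix H₁ H₁ ℂ → Matrix H₁ H₁ ℂ → Prop)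
    (N₂ : Matrix H₂ H₂ ℂ → Matrix H₂ H₂ ℂ → Prop)
    (ε₁ ε₂ δ₁ δ₂ : ℝ) (hδ₁ : 0 ≤ δ₁) (hδ₂ : 0 ≤ δ₂)
    -- each channel maps density operators to density operators
    (hA₁state : ∀ ρ : Matrix H₁ H₁ ℂ, ρ.PosSemidef → ρ.trace = 1 →
      (A₁ ρ).PosSemidef ∧ (A₁ ρ).trace = 1)
    (hA₂state : ∀ ρ : Matrix H₂ H₂ ℂ, ρ.PosSemidef → ρ.trace = 1 →
      (A₂ ρ).PosSemidef ∧ (A₂ ρ).trace = 1)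
    -- `A₁` is `(ε₁,δ₁)`-QDP
    (hQDP₁ : ∀ ρ σ : Matrix H₁ H₁ ℂ, N₁ ρ σ →
      ∀ M₁ : Matrix K₁ K₁ ℂ, M₁.PosSemidef → (1 - M₁).PosSemidef →
        (M₁ * A₁ ρ).trace.re ≤ Real.exp ε₁ * (M₁ * A₁ σ).trace.re + δ₁)
    -- `A₂` is `(ε₂,δ₂)`-QDP
    (hQDP₂ : ∀ ρ σ : Matrix H₂ H₂ ℂ, N₂ ρ σ →
      ∀ M₂ : Matrix K₂ K₂ ℂ, M₂.PosSemidef → (1 - M₂).PosSemidef →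
        (M₂ * A₂ ρ).trace.re ≤ Real.exp ε₂ * (M₂ * A₂ σ).trace.re + δ₂)
    -- product neighboring states
    (ρ₁ σ₁ : Matrix H₁ H₁ ℂ) (ρ₂ σ₂ : Matrix H₂ H₂ ℂ)
    (hρ₁ : ρ₁.PosSemidef) (hρ₁t : ρ₁.trace = 1)
    (hσ₁ : σ₁.PosSemidef) (hσ₁t : σ₁.trace = 1)
    (hρ₂ : ρ₂.PosSemidef) (hρ₂t : ρ₂.trace = 1)
    (hσ₂ : σ₂.PosSemidef) (hσ₂t : σ₂.trace = 1)
    (hN₁ : N₁ ρ₁ σ₁) (hN₂ : N₂ ρ₂ σ₂)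
    -- the one-way LOCC test `M`
    (M : Matrix (K₁ × K₂) (K₁ × K₂) ℂ)
    (hM : M.PosSemidef) (hM' : (1 - M).PosSemidef)
    {T : Type*} [Fintype T]
    (E : T → Matrix K₁ K₁ ℂ) (M₂ : T → Matrix K₂ K₂ ℂ)
    (hE : ∀ t, (E t).PosSemidef) (hEsum : ∑ t, E t = 1)
    (hM₂ : ∀ t, (M₂ t).PosSemidef) (hM₂' : ∀ t, (1 - M₂ t).PosSemidef)
    (hfac : ∀ (ξ₁ : Matrix K₁ K₁ ℂ) (ξ₂ : Matrix K₂ K₂ ℂ),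
      ξ₁.PosSemidef → ξ₁.trace = 1 → ξ₂.PosSemidef → ξ₂.trace = 1 →
      (M * (ξ₁ ⊗ₖ ξ₂)).trace.re
        = ∑ t, (E t * ξ₁).trace.re * (M₂ t * ξ₂).trace.re) :
    (M * (A₁ ρ₁ ⊗ₖ A₂ ρ₂)).trace.re
      ≤ Real.exp (ε₁ + ε₂) * (M * (A₁ σ₁ ⊗ₖ A₂ σ₂)).trace.re
        + Real.exp ε₂ * δ₁ + δ₂ := by

  obtain ⟨hX₁psd, hX₁tr⟩ := hA₁state ρ₁ hρ₁ hρ₁t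
  obtain ⟨hY₁psd, hY₁tr⟩ := hA₁state σ₁ hσ₁ hσ₁t
  obtain ⟨hX₂psd, hX₂tr⟩ := hA₂state ρ₂ hρ₂ hρ₂t
  obtain ⟨hY₂psd, hY₂tr⟩ := hA₂state σ₂ hσ₂ hσ₂t
  rw [hfac (A₁ ρ₁) (A₂ ρ₂) hX₁psd hX₁tr hX₂psd hX₂tr,
      hfac (A₁ σ₁) (A₂ σ₂) hY₁psd hY₁tr hY₂psd hY₂tr]
  set p : T → ℝ := fun t => (E t * A₁ ρ₁).trace.re with hp_def
  set s : T → ℝ := fun t => (E t * A₁ σ₁).trace.re with hs_def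
  set q : T → ℝ := fun t => (M₂ t * A₂ σ₂).trace.re with hq_def
  have hp0 : ∀ t, 0 ≤ p t := fun t => trace_mul_re_nonneg (hE t) hX₁psd
  have hq0 : ∀ t, 0 ≤ q t := fun t => trace_mul_re_nonneg (hM₂ t) hY₂psd
  have hq1 : ∀ t, q t ≤ 1 := fun t => trace_mul_re_le_one (hM₂' t) hY₂psd hY₂tr
  -- total probability
  have hsump : ∑ t, p t = 1 := by
    have h1 : ∑ t, (E t * A₁ ρ₁).trace = (A₁ ρ₁).trace := by
      rw [← Matrix.trace_sum, ← Finset.sum_mul, hEsum, Matrix.one_mul]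
    have h2 : (∑ t, (E t * A₁ ρ₁).trace).re = 1 := by rw [h1, hX₁tr]; rfl
    rw [Complex.re_sum] at h2
    exact h2
  -- apply QDP₂ termwise
  have key2 : ∀ t, (M₂ t * A₂ ρ₂).trace.re ≤ Real.exp ε₂ * q t + δ₂ :=
    fun t => hQDP₂ ρ₂ σ₂ hN₂ (M₂ t) (hM₂ t) (hM₂' t)
  have step1 : ∑ t, p t * (M₂ t * A₂ ρ₂).trace.re
      ≤ Real.exp ε₂ * (∑ t, p t * q t) + δ₂ := by
    calc ∑ t, p t * (M₂ t * A₂ ρ₂).trace.re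
        ≤ ∑ t, p t * (Real.exp ε₂ * q t + δ₂) :=
          Finset.sum_le_sum fun t _ => mul_le_mul_of_nonneg_left (key2 t) (hp0 t)
      _ = Real.exp ε₂ * (∑ t, p t * q t) + δ₂ * ∑ t, p t := by
          rw [Finset.mul_sum, Finset.mul_sum, ← Finset.sum_add_distrib]
          congr 1; ext t; ring
      _ = Real.exp ε₂ * (∑ t, p t * q t) + δ₂ := by rw [hsump, mul_one]
  -- package the F operator
  set F : Matrix K₁ K₁ ℂ := ∑ t, ((q t : ℂ)) • E t with hF_def
  have hFpsd : F.PosSemidef := psd_sum fun t => psd_real_smul (hE t) (hq0 t)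
  have hF1 : (1 - F).PosSemidef := by
    have : (1 : Matrix K₁ K₁ ℂ) - F = ∑ t, (((1 - q t : ℝ) : ℂ)) • E t := by
      rw [hF_def, ← hEsum, ← Finset.sum_sub_distrib]
      congr 1; ext t
      push_cast
      rw [sub_smul, one_smul]
    rw [this]
    exact psd_sum fun t => psd_real_smul (hE t) (by linarith [hq1 t])
  have hFtr : ∀ X : Matrix K₁ K₁ ℂ, (F * X).trace.re = ∑ t, q t * (E t * X).trace.re := by
    intro X
    rw [hF_def, Finset.sum_mul, Matrix.trace_sum, Complex.re_sum]
    congr 1; ext t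
    rw [Matrix.smul_mul, Matrix.trace_smul, smul_eq_mul, Complex.re_ofReal_mul]
  -- apply QDP₁ to F
  have key1 : (F * A₁ ρ₁).trace.re ≤ Real.exp ε₁ * (F * A₁ σ₁).trace.re + δ₁ :=
    hQDP₁ ρ₁ σ₁ hN₁ F hFpsd hF1
  rw [hFtr (A₁ ρ₁), hFtr (A₁ σ₁)] at key1
  have hpq : ∑ t, p t * q t = ∑ t, q t * (E t * A₁ ρ₁).trace.re := by
    exact Finset.sum_congr rfl fun t _ => mul_comm _ _
  have hsq : ∑ t, q t * (E t * A₁ σ₁).trace.re = ∑ t, s t * q t := by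
    exact Finset.sum_congr rfl fun t _ => mul_comm _ _
  rw [hpq] at step1
  rw [hsq] at key1
  have hexp2 : (0:ℝ) ≤ Real.exp ε₂ := (Real.exp_pos ε₂).le
  calc ∑ t, p t * (M₂ t * A₂ ρ₂).trace.re
      ≤ Real.exp ε₂ * (∑ t, q t * (E t * A₁ ρ₁).trace.re) + δ₂ := step1
    _ ≤ Real.exp ε₂ * (Real.exp ε₁ * (∑ t, s t * q t) + δ₁) + δ₂ := by
        have := mul_le_mul_of_nonneg_left key1 hexp2
        linarith
    _ = Real.exp (ε₁ + ε₂) * (∑ t, s t * q t) + Real.exp ε₂ * δ₁ + δ₂ := by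
        rw [Real.exp_add]; ring
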